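/- Let T>0 and 0<γ<γ'≤1. Let f : ℝ → ℝ satisfy f(t)=0 for all t ≤ 0 and suppose f is γ'-Hölder on (−∞,T] with seminorm ‖f‖_{γ'}. For an integer n ≥ 1 define the smoothed function f^n(t) = n ∫_{max(t−1/n,0)}^{t} f(s) ds for t ∈ [0,T]. Then the γ-Hölder seminorm of f^n − f on [0,T] satisfies ‖f^n − f‖_{γ,[0,T]} ≤ 2‖f‖_{γ'} · n^{−(γ'−γ)}. -/

import Mathlib

open Set intervalIntegral MeasureTheory Filter Topology

/-- Lemma 5.4 of the paper (deterministic, pathwise content): if `f` vanishes on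
`(-∞,0]` and is `γ'`-Hölder on `(-∞,T]` with seminorm `C`, then for `0 < γ < γ'`
the moving average `f^n(t) = n ∫_{max(t−1/n,0)}^t f(s) ds` satisfies
`‖f^n − f‖_{γ,[0,T]} ≤ 2 C n^{−(γ'−γ)}`. -/
theorem stmt_2 (T : ℝ) (hT : 0 < T) (γ γ' : ℝ) (hγ : 0 < γ) (hγγ' : γ < γ')
    (hγ'1 : γ' ≤ 1)
    (f : ℝ → ℝ) (hf0 : ∀ t ≤ (0:ℝ), f t = 0)
    (C : ℝ) (hf : ∀ s ≤ T, ∀ t ≤ T, |f t - f s| ≤ C * |t - s| ^ γ')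
    (n : ℕ) (hn : 1 ≤ n)
    (fn : ℝ → ℝ)
    (hfn : ∀ t ∈ Set.Icc (0:ℝ) T, fn t = n * ∫ s in (max (t - 1 / n) 0)..t, f s) :
    ∀ s ∈ Set.Icc (0:ℝ) T, ∀ t ∈ Set.Icc (0:ℝ) T,
      |(fn t - f t) - (fn s - f s)| ≤ 2 * C * (n : ℝ) ^ (-(γ' - γ)) * |t - s| ^ γ := by
  have hγ'pos : 0 < γ' := hγ.trans hγγ'
  set N : ℝ := (n : ℝ) with hNdef
  have hN1 : (1:ℝ) ≤ N := by rw [hNdef]; exact_mod_cast hn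
  have hNpos : (0:ℝ) < N := lt_of_lt_of_le one_pos hN1
  have hNinv : (0:ℝ) < 1 / N := by positivity
  have hC : 0 ≤ C := by
    have h1 := hf 0 hT.le T le_rfl
    have h2 : (0:ℝ) < |T - 0| ^ γ' := by
      apply Real.rpow_pos_of_pos
      rw [sub_zero, abs_of_pos hT]; exact hT
    nlinarith [abs_nonneg (f T - f 0)]
  -- convenient Hölder estimate
  have hfle : ∀ u ≤ T, ∀ v ≤ T, ∀ r : ℝ, |v - u| ≤ r → |f v - f u| ≤ C * r ^ γ' := by
    intro u hu v hv r hr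
    refine (hf u hu v hv).trans ?_
    exact mul_le_mul_of_nonneg_left (Real.rpow_le_rpow (abs_nonneg _) hr hγ'pos.le) hC
  -- continuity on (-∞, T]
  have hcont : ContinuousOn f (Iic T) := by
    intro x hx
    rw [ContinuousWithinAt, tendsto_iff_dist_tendsto_zero]
    have hb : Tendsto (fun y : ℝ => C * |y - x| ^ γ') (𝓝[Iic T] x) (𝓝 0) := by
      have h3 : ContinuousAt (fun y : ℝ => |y - x|) x :=
        (continuous_abs.comp (continuous_id.sub continuous_const)).continuousAt
      have h4 : ContinuousAt (fun y : ℝ => |y - x| ^ γ') x := by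
        show ContinuousAt ((fun z : ℝ => z ^ γ') ∘ fun y : ℝ => |y - x|) x
        exact ContinuousAt.comp (by simpa using Real.continuousAt_rpow_const 0 γ' (Or.inr hγ'pos.le)) h3
      have h5 : ContinuousAt (fun y : ℝ => C * |y - x| ^ γ') x := continuousAt_const.mul h4
      have := (h5.continuousWithinAt (s := Iic T)).tendsto
      simpa [Real.zero_rpow hγ'pos.ne'] using this
    apply squeeze_zero' ?_ ?_ hb
    · filter_upwards with y using dist_nonneg
    · filter_upwards [self_mem_nhdsWithin] with y hy
      rw [Real.dist_eq]
      exact hf x hx y hy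
  have hint : ∀ a b : ℝ, a ≤ T → b ≤ T → IntervalIntegrable f MeasureTheory.volume a b := by
    intro a b ha hb
    apply (hcont.mono ?_).intervalIntegrable
    intro x hx
    exact le_trans hx.2 (max_le ha hb)
  -- rewrite fn
  have hfn2 : ∀ t ∈ Set.Icc (0:ℝ) T, fn t = N * ∫ u in (t - 1/N)..t, f u := by
    intro t ht
    rw [hfn t ht]
    congr 1
    rcases le_or_gt 0 (t - 1/N) with h | h
    · rw [max_eq_left h]
    · rw [max_eq_right h.le]
      have h0 : (∫ u in (t - 1/N)..(0:ℝ), f u) = 0 := by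
        rw [intervalIntegral.integral_congr (g := fun _ => (0:ℝ)) ?_, intervalIntegral.integral_zero]
        intro u hu
        rw [uIcc_of_le h.le] at hu
        exact hf0 u hu.2
      have hadd := intervalIntegral.integral_add_adjacent_intervals
        (hint (t - 1/N) 0 (by linarith) hT.le) (hint 0 t hT.le ht.2)
      rw [← hadd, h0, zero_add]
  -- uniform bound
  have hbd : ∀ t ∈ Set.Icc (0:ℝ) T, |fn t - f t| ≤ C * (1/N) ^ γ' := by
    intro t ht
    obtain ⟨ht0, htT⟩ := ht
    rcases le_or_gt 0 (t - 1/N) with h | h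
    · -- t ≥ 1/N
      have heq : fn t - f t = N * ∫ u in (t - 1/N)..t, (f u - f t) := by
        rw [hfn2 t ⟨ht0, htT⟩,
          intervalIntegral.integral_sub (hint _ t (by linarith) htT) intervalIntegrable_const,
          intervalIntegral.integral_const]
        have : t - (t - 1/N) = 1/N := by ring
        rw [this]
        field_simp
        rw [smul_eq_mul, mul_sub, ← mul_assoc, mul_one_div_cancel hNpos.ne', one_mul]
      rw [heq, abs_mul, abs_of_pos hNpos]
      have hb : ‖∫ u in (t - 1/N)..t, (f u - f t)‖ ≤ (C * (1/N) ^ γ') * |t - (t - 1/N)| := by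
        apply intervalIntegral.norm_integral_le_of_norm_le_const
        intro u hu
        rw [uIoc_of_le (by linarith : t - 1/N ≤ t)] at hu
        rw [Real.norm_eq_abs]
        apply hfle t htT u (hu.2.trans htT) (1/N)
        rw [abs_of_nonpos (by linarith [hu.2] : u - t ≤ 0)]
        linarith [hu.1]
      rw [Real.norm_eq_abs] at hb
      calc N * |∫ u in (t - 1/N)..t, (f u - f t)| ≤ N * ((C * (1/N)^γ') * |t - (t - 1/N)|) := by
            exact mul_le_mul_of_nonneg_left hb hNpos.le
        _ = C * (1/N)^γ' := by
            rw [show t - (t - 1/N) = 1/N by ring, abs_of_pos hNinv]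
            field_simp
    · -- t < 1/N
      have hf00 : f 0 = 0 := hf0 0 le_rfl
      have hft : |f t| ≤ C * t ^ γ' := by
        have := hf 0 hT.le t htT
        rwa [hf00, sub_zero, sub_zero, abs_of_nonneg ht0] at this
      have heq : fn t - f t = N * (∫ u in (0:ℝ)..t, (f u - f t)) + (N * t - 1) * f t := by
        rw [hfn t ⟨ht0, htT⟩, max_eq_right h.le,
          intervalIntegral.integral_sub (hint 0 t hT.le htT) intervalIntegrable_const,
          intervalIntegral.integral_const]
        simp only [smul_eq_mul, sub_zero]
        ring
      rw [heq]
      have hb : ‖∫ u in (0:ℝ)..t, (f u - f t)‖ ≤ (C * t ^ γ') * |t - 0| := by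
        apply intervalIntegral.norm_integral_le_of_norm_le_const
        intro u hu
        rw [uIoc_of_le ht0] at hu
        rw [Real.norm_eq_abs]
        apply hfle t htT u (hu.2.trans htT) t
        rw [abs_of_nonpos (by linarith [hu.2] : u - t ≤ 0)]
        linarith [hu.1]
      rw [Real.norm_eq_abs] at hb
      have htγ : t ^ γ' ≤ (1/N) ^ γ' := Real.rpow_le_rpow ht0 (by linarith) hγ'pos.le
      have h1 : |N * (∫ u in (0:ℝ)..t, (f u - f t))| ≤ (N * t) * (C * t ^ γ') := by
        rw [abs_mul, abs_of_pos hNpos]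
        calc N * |∫ u in (0:ℝ)..t, (f u - f t)| ≤ N * ((C * t ^ γ') * |t - 0|) :=
              mul_le_mul_of_nonneg_left hb hNpos.le
          _ = (N * t) * (C * t ^ γ') := by rw [sub_zero, abs_of_nonneg ht0]; ring
      have h2 : |(N * t - 1) * f t| ≤ (1 - N * t) * (C * t ^ γ') := by
        rw [abs_mul]
        have hNt : N * t ≤ 1 := by
          rw [mul_comm]
          exact (le_div_iff₀ hNpos).mp (by linarith)
        rw [abs_of_nonpos (by linarith)]
        apply mul_le_mul (by linarith) hft (abs_nonneg _) (by linarith)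
      calc |N * (∫ u in (0:ℝ)..t, (f u - f t)) + (N * t - 1) * f t|
          ≤ |N * (∫ u in (0:ℝ)..t, (f u - f t))| + |(N * t - 1) * f t| := abs_add_le _ _
        _ ≤ (N * t) * (C * t ^ γ') + (1 - N * t) * (C * t ^ γ') := add_le_add h1 h2
        _ = C * t ^ γ' := by ring
        _ ≤ C * (1/N) ^ γ' := mul_le_mul_of_nonneg_left htγ hC
  -- increment bound (ordered)
  have hincr : ∀ s ∈ Set.Icc (0:ℝ) T, ∀ t ∈ Set.Icc (0:ℝ) T, s ≤ t →
      |(fn t - f t) - (fn s - f s)| ≤ 2 * C * (t - s) ^ γ' := by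
    intro s hs t ht hst
    have hA : IntervalIntegrable (fun u => f (u + (t - s))) MeasureTheory.volume (s - 1/N) s := by
      have h := (hint (t - 1/N) t (by linarith [ht.2]) ht.2).comp_add_right (t - s)
      rwa [show t - 1/N - (t - s) = s - 1/N by ring, show t - (t - s) = s by ring] at h
    have hdiff : fn t - fn s = N * ∫ u in (s - 1/N)..s, (f (u + (t - s)) - f u) := by
      rw [hfn2 t ht, hfn2 s hs, ← mul_sub]
      congr 1
      rw [intervalIntegral.integral_sub hA (hint (s - 1/N) s (by linarith [hs.2]) hs.2),
        intervalIntegral.integral_comp_add_right (fun u => f u) (t - s),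
        show s - 1/N + (t - s) = t - 1/N by ring, show s + (t - s) = t by ring]
    have hfn_bd : |fn t - fn s| ≤ C * (t - s) ^ γ' := by
      rw [hdiff, abs_mul, abs_of_pos hNpos]
      have hb : ‖∫ u in (s - 1/N)..s, (f (u + (t - s)) - f u)‖ ≤ (C * (t - s) ^ γ') * |s - (s - 1/N)| := by
        apply intervalIntegral.norm_integral_le_of_norm_le_const
        intro u hu
        rw [uIoc_of_le (by linarith : s - 1/N ≤ s)] at hu
        rw [Real.norm_eq_abs]
        apply hfle u (hu.2.trans hs.2) (u + (t - s)) (by linarith [hu.2, ht.2]) (t - s)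
        rw [show u + (t - s) - u = t - s by ring, abs_of_nonneg (by linarith)]
      rw [Real.norm_eq_abs] at hb
      calc N * |∫ u in (s - 1/N)..s, (f (u + (t - s)) - f u)|
          ≤ N * ((C * (t - s) ^ γ') * |s - (s - 1/N)|) := mul_le_mul_of_nonneg_left hb hNpos.le
        _ = C * (t - s) ^ γ' := by
            rw [show s - (s - 1/N) = 1/N by ring, abs_of_pos hNinv]
            field_simp
    have hf_bd : |f t - f s| ≤ C * (t - s) ^ γ' := by
      apply hfle s hs.2 t ht.2 (t - s)
      rw [abs_of_nonneg (by linarith)]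
    calc |(fn t - f t) - (fn s - f s)| = |(fn t - fn s) - (f t - f s)| := by congr 1; ring
      _ ≤ |fn t - fn s| + |f t - f s| := abs_sub _ _
      _ ≤ C * (t - s) ^ γ' + C * (t - s) ^ γ' := add_le_add hfn_bd hf_bd
      _ = 2 * C * (t - s) ^ γ' := by ring
  -- main combination, for s ≤ t
  have main : ∀ s ∈ Set.Icc (0:ℝ) T, ∀ t ∈ Set.Icc (0:ℝ) T, s ≤ t →
      |(fn t - f t) - (fn s - f s)| ≤ 2 * C * N ^ (-(γ' - γ)) * (t - s) ^ γ := by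
    intro s hs t ht hst
    rcases eq_or_lt_of_le hst with rfl | hlt
    · simp [Real.zero_rpow hγ.ne']
    have hts : 0 < t - s := by linarith
    rcases le_total (t - s) (1/N) with hcase | hcase
    · calc |(fn t - f t) - (fn s - f s)| ≤ 2 * C * (t - s) ^ γ' := hincr s hs t ht hst
        _ = 2 * C * ((t - s) ^ (γ' - γ) * (t - s) ^ γ) := by
            rw [← Real.rpow_add hts, sub_add_cancel]
        _ ≤ 2 * C * ((1/N) ^ (γ' - γ) * (t - s) ^ γ) := by
            apply mul_le_mul_of_nonneg_left _ (by linarith : (0:ℝ) ≤ 2 * C)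
            apply mul_le_mul_of_nonneg_right
              (Real.rpow_le_rpow hts.le hcase (by linarith))
              (Real.rpow_nonneg hts.le γ)
        _ = 2 * C * N ^ (-(γ' - γ)) * (t - s) ^ γ := by
            rw [one_div, Real.inv_rpow hNpos.le, ← Real.rpow_neg hNpos.le]
            ring
    · have hbds := hbd s hs
      have hbdt := hbd t ht
      calc |(fn t - f t) - (fn s - f s)| ≤ |fn t - f t| + |fn s - f s| := abs_sub _ _
        _ ≤ 2 * (C * (1/N) ^ γ') := by linarith
        _ = 2 * C * (N ^ (-(γ' - γ)) * N ^ (-γ)) := by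
            rw [← Real.rpow_add hNpos, show -(γ' - γ) + -γ = -γ' by ring,
              Real.rpow_neg hNpos.le, one_div, Real.inv_rpow hNpos.le]
            ring
        _ ≤ 2 * C * (N ^ (-(γ' - γ)) * (t - s) ^ γ) := by
            apply mul_le_mul_of_nonneg_left _ (by linarith : (0:ℝ) ≤ 2 * C)
            apply mul_le_mul_of_nonneg_left _ (Real.rpow_nonneg hNpos.le _)
            rw [Real.rpow_neg hNpos.le, ← Real.inv_rpow hNpos.le, ← one_div]
            exact Real.rpow_le_rpow hNinv.le hcase hγ.le
        _ = 2 * C * N ^ (-(γ' - γ)) * (t - s) ^ γ := by ring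
  intro s hs t ht
  rcases le_total s t with h | h
  · rw [abs_of_nonneg (by linarith : (0:ℝ) ≤ t - s)] -- |t - s|
    exact main s hs t ht h
  · have h1 := main t ht s hs h
    rw [abs_sub_comm] at h1
    rwa [show |t - s| = s - t by rw [abs_sub_comm]; exact abs_of_nonneg (by linarith)]
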